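/- If x is an eigenvector of a symmetric real n×n matrix A with eigenvalue λ, and all entries of A lie in [c,b] with 0 < c ≤ b, and all entries of x are positive, then the largest entry of x is at most (b/c) times the smallest entry of x. -/
import Mathlib


/-- For a positive eigenvector of a symmetric matrix with entries in `[c, b]`,
the largest entry is at most `b / c` times the smallest entry. -/
theorem positive_eigenvector_entry_ratio (n : ℕ) (A : Matrix (Fin n) (Fin n) ℝ)
    (c b lam : ℝ) (hA : A.IsSymm) (hc : 0 < c) (hcb : c ≤ b)
    (hbound : ∀ i j, c ≤ A i j ∧ A i j ≤ b)
    (x : Fin n → ℝ) (hxpos : ∀ i, 0 < x i) (hlam : 0 < lam)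
    (heig : A.mulVec x = lam • x) :
    ∀ i j, x i ≤ (b / c) * x j := by
  intro i j
  set S := ∑ k, x k with hS
  have hSpos : 0 < S := Finset.sum_pos (fun k _ => hxpos k) ⟨j, Finset.mem_univ j⟩
  have hrow : ∀ k, lam * x k = ∑ l, A k l * x l := by
    intro k
    have := congrFun heig k
    simpa [Matrix.mulVec, dotProduct, mul_comm] using this.symm
  have hup : lam * x i ≤ b * S := by
    rw [hrow i, hS, Finset.mul_sum]
    exact Finset.sum_le_sum fun l _ =>
      mul_le_mul_of_nonneg_right (hbound i l).2 (hxpos l).le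
  have hlo : c * S ≤ lam * x j := by
    rw [hrow j, hS, Finset.mul_sum]
    exact Finset.sum_le_sum fun l _ =>
      mul_le_mul_of_nonneg_right (hbound j l).1 (hxpos l).le
  have : c * (lam * x i) ≤ b * (lam * x j) := by
    calc c * (lam * x i) ≤ c * (b * S) := by nlinarith
      _ = b * (c * S) := by ring
      _ ≤ b * (lam * x j) := by nlinarith [hc.trans_le hcb]
  rw [div_mul_eq_mul_div, le_div_iff₀ hc]
  nlinarith
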